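/- If a multiset A of natural numbers satisfies ∑_{n ∈ A} 2^n ≥ 2^N, all elements of A are ≤ N, and N ∉ A, then there exist disjoint sub-multisets A₁, A₂ of A (i.e., A₁ + A₂ ≤ A) each with ∑_{n ∈ Aᵢ} 2^n = 2^{N−1}. -/

import Mathlib

lemma extract_pow : ∀ (M : ℕ) (A : Multiset ℕ), (∀ n ∈ A, n ≤ M) →
    2 ^ M ≤ (A.map (fun n => 2 ^ n)).sum →
    ∃ B, B ≤ A ∧ (B.map (fun n => 2 ^ n)).sum = 2 ^ M := by
  intro M
  induction M with
  | zero =>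
    intro A h hs
    have hA : A ≠ 0 := by
      rintro rfl; simp at hs
    obtain ⟨n, hn⟩ := Multiset.exists_mem_of_ne_zero hA
    have hn0 : n = 0 := Nat.le_zero.mp (h n hn)
    exact ⟨{n}, Multiset.singleton_le.mpr hn, by simp [hn0]⟩
  | succ M ih =>
    intro A h hs
    by_cases hmem : (M + 1) ∈ A
    · exact ⟨{M + 1}, Multiset.singleton_le.mpr hmem, by simp⟩
    · have h' : ∀ n ∈ A, n ≤ M := by
        intro n hn
        have h1 := h n hn
        have h2 : n ≠ M + 1 := by intro e; subst e; exact hmem hn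
        omega
      have hs' : 2 ^ M ≤ (A.map (fun n => 2 ^ n)).sum :=
        le_trans (Nat.pow_le_pow_right (by norm_num) (Nat.le_succ M)) hs
      obtain ⟨B, hB, hBs⟩ := ih A h' hs'
      have hsplit : A = B + (A - B) := (add_tsub_cancel_of_le hB).symm
      have hsum2 : (A.map (fun n => 2 ^ n)).sum
          = (B.map (fun n => 2 ^ n)).sum + ((A - B).map (fun n => 2 ^ n)).sum := by
        conv_lhs => rw [hsplit]
        simp
      have hs2 : 2 ^ M ≤ ((A - B).map (fun n => 2 ^ n)).sum := by
        have : 2 ^ (M + 1) = 2 ^ M + 2 ^ M := by ring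
        omega
      have h2 : ∀ n ∈ A - B, n ≤ M := fun n hn =>
        h' n (Multiset.mem_of_le (Multiset.sub_le_self A B) hn)
      obtain ⟨C, hC, hCs⟩ := ih (A - B) h2 hs2
      refine ⟨B + C, ?_, ?_⟩
      · calc B + C ≤ B + (A - B) := add_le_add_right hC B
          _ = A := (add_tsub_cancel_of_le hB)
      · simp [hBs, hCs]; ring

theorem stmt_18 (A : Multiset ℕ) (N : ℕ) (hN : 1 ≤ N)
    (hsum : 2 ^ N ≤ (A.map (fun n => 2 ^ n)).sum)
    (hle : ∀ n ∈ A, n ≤ N)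
    (hN' : N ∉ A) :
    ∃ A₁ A₂ : Multiset ℕ, A₁ + A₂ ≤ A ∧
      (A₁.map (fun n => 2 ^ n)).sum = 2 ^ (N - 1) ∧
      (A₂.map (fun n => 2 ^ n)).sum = 2 ^ (N - 1) := by
  have h' : ∀ n ∈ A, n ≤ N - 1 := by
    intro n hn
    have := hle n hn
    have : n ≠ N := fun e => hN' (e ▸ hn)
    omega
  have hpow : 2 ^ N = 2 ^ (N - 1) + 2 ^ (N - 1) := by
    have h1 : 2 ^ N = 2 ^ (N - 1) * 2 := by
      rw [← pow_succ]; congr 1; omega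
    omega
  obtain ⟨A₁, hA₁, hA₁s⟩ := extract_pow (N - 1) A h' (le_trans (Nat.pow_le_pow_right (by norm_num) (Nat.sub_le N 1)) hsum)
  have hsplit : A = A₁ + (A - A₁) := (add_tsub_cancel_of_le hA₁).symm
  have hsum2 : (A.map (fun n => 2 ^ n)).sum
      = (A₁.map (fun n => 2 ^ n)).sum + ((A - A₁).map (fun n => 2 ^ n)).sum := by
    conv_lhs => rw [hsplit]
    simp
  have hs2 : 2 ^ (N - 1) ≤ ((A - A₁).map (fun n => 2 ^ n)).sum := by omega
  have h2 : ∀ n ∈ A - A₁, n ≤ N - 1 := fun n hn =>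
    h' n (Multiset.mem_of_le (Multiset.sub_le_self A A₁) hn)
  obtain ⟨A₂, hA₂, hA₂s⟩ := extract_pow (N - 1) (A - A₁) h2 hs2
  refine ⟨A₁, A₂, ?_, hA₁s, hA₂s⟩
  calc A₁ + A₂ ≤ A₁ + (A - A₁) := add_le_add_right hA₂ A₁
    _ = A := add_tsub_cancel_of_le hA₁
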